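/- After gluing three vertices v₁, v₂, v₃ (with minimum half-edges a₁ <_γ a₂ <_γ a₃) of a unicellular map into a single vertex v̄ = (a₁, h₂¹,…,h₂^{m₂}, a₂, h₃¹,…,h₃^{m₃}, a₃, h₁¹,…,h₁^{m₁}), the half-edge σ̄⁻¹(a₃) is a trisection of the resulting unicellular map. -/

import Mathlib

open scoped Classical

/-- The number of cycles (orbits, including fixed points) of a permutation. -/
def cycleCount {H : Type*} [Fintype H] [DecidableEq H] (σ : Equiv.Perm H) : ℕ :=
  (Fintype.card H - σ.support.card) + σ.cycleType.card

/-- The position of `h` in the orbit of the root `r` under `γ`: the least `k` with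
`γ^k r = h` (and `0` if `h` is not in the orbit).  This induces the linear order
`<_γ` on half-edges. -/
noncomputable def gpos {H : Type*} (γ : Equiv.Perm H) (r h : H) : ℕ :=
  if hh : ∃ k, (γ ^ k) r = h then Nat.find hh else 0

/-- `m` is the minimum half-edge (w.r.t. `<_γ` rooted at `r`) of its `σ`-cycle. -/
def IsMinHE {H : Type*} (σ γ : Equiv.Perm H) (r m : H) : Prop :=
  ∀ y, σ.SameCycle m y → gpos γ r m ≤ gpos γ r y

/-- `h` is a trisection: a down-step (`σ h ≤_γ h`) such that `σ h` is not the minimum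
half-edge of its vertex. -/
def IsTrisection {H : Type*} (σ γ : Equiv.Perm H) (r h : H) : Prop :=
  gpos γ r (σ h) ≤ gpos γ r h ∧ ¬ IsMinHE σ γ r (σ h)

/-- The rearrangement of tour positions induced by gluing:  positions up to `p₁`
are kept, then comes the segment `(p₂, p₃]`, then `(p₁, p₂]`, then the rest. -/
def tw (p₁ p₂ p₃ t : ℕ) : ℕ :=
  if t ≤ p₁ then t
  else if t ≤ p₁ + (p₃ - p₂) then t - p₁ + p₂
  else if t ≤ p₃ then t - (p₃ - p₂)
  else t

lemma gpos_spec' {H : Type*} (γ : Equiv.Perm H) (r h : H) (hh : ∃ k, (γ ^ k) r = h) :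
    (γ ^ gpos γ r h) r = h := by
  rw [gpos, dif_pos hh]
  exact Nat.find_spec hh

lemma gpos_le' {H : Type*} (γ : Equiv.Perm H) (r h : H) (hh : ∃ k, (γ ^ k) r = h)
    {j : ℕ} (hj : (γ ^ j) r = h) : gpos γ r h ≤ j := by
  rw [gpos, dif_pos hh]
  exact Nat.find_le hj

lemma gpos_eq' {H : Type*} (γ : Equiv.Perm H) (r h : H) {t : ℕ} (ht : (γ ^ t) r = h)
    (hmin : ∀ j, (γ ^ j) r = h → t ≤ j) : gpos γ r h = t := by
  have hh : ∃ k, (γ ^ k) r = h := ⟨t, ht⟩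
  rw [gpos, dif_pos hh]
  exact le_antisymm (Nat.find_le ht) (hmin _ (Nat.find_spec hh))

lemma tw_inj {p₁ p₂ p₃ : ℕ} (h12 : p₁ < p₂) (h23 : p₂ < p₃) :
    Function.Injective (tw p₁ p₂ p₃) := by
  intro s t h
  unfold tw at h
  split_ifs at h <;> omega

lemma tw_lt {p₁ p₂ p₃ N : ℕ} (h12 : p₁ < p₂) (h23 : p₂ < p₃) (h3 : p₃ < N)
    {t : ℕ} (ht : t < N) : tw p₁ p₂ p₃ t < N := by
  unfold tw; split_ifs <;> omega

theorem glued_map_has_trisection {n : ℕ}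
    (α σ : Equiv.Perm (Fin (2 * n)))
    (hinv : α * α = 1) (hfpf : ∀ x, α x ≠ x)
    (hcyc : (α * σ).IsCycle) (hsupp : (α * σ).support = Finset.univ)
    (r a₁ a₂ a₃ : Fin (2 * n))
    (hd12 : ¬ σ.SameCycle a₁ a₂) (hd13 : ¬ σ.SameCycle a₁ a₃)
    (hd23 : ¬ σ.SameCycle a₂ a₃)
    (hm1 : IsMinHE σ (α * σ) r a₁) (hm2 : IsMinHE σ (α * σ) r a₂)
    (hm3 : IsMinHE σ (α * σ) r a₃)
    (ho12 : gpos (α * σ) r a₁ < gpos (α * σ) r a₂)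
    (ho23 : gpos (α * σ) r a₂ < gpos (α * σ) r a₃) :
    IsTrisection (σ * (Equiv.swap a₁ a₂ * Equiv.swap a₂ a₃))
      (α * (σ * (Equiv.swap a₁ a₂ * Equiv.swap a₂ a₃))) r
      ((σ * (Equiv.swap a₁ a₂ * Equiv.swap a₂ a₃))⁻¹ a₃) := by
  classical
  have hN : 0 < 2 * n := a₃.pos
  set c : Equiv.Perm (Fin (2 * n)) := Equiv.swap a₁ a₂ * Equiv.swap a₂ a₃ with hc
  set γ : Equiv.Perm (Fin (2 * n)) := α * σ with hγ
  set σb : Equiv.Perm (Fin (2 * n)) := σ * c with hσb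
  -- basic facts about γ
  have hmove : ∀ x : Fin (2 * n), γ x ≠ x := fun x =>
    Equiv.Perm.mem_support.mp (by rw [hsupp]; exact Finset.mem_univ x)
  have hord : orderOf γ = 2 * n := by
    rw [hcyc.orderOf, hsupp, Finset.card_univ, Fintype.card_fin]
  have hex : ∀ x : Fin (2 * n), ∃ k, (γ ^ k) r = x := by
    intro x
    obtain ⟨i, _, hi⟩ := (hcyc.sameCycle (hmove r) (hmove x)).exists_pow_eq'
    exact ⟨i, hi⟩
  have gspec : ∀ x : Fin (2 * n), (γ ^ gpos γ r x) r = x := fun x =>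
    gpos_spec' γ r x (hex x)
  have gmin : ∀ (x : Fin (2 * n)) (j : ℕ), (γ ^ j) r = x → gpos γ r x ≤ j := fun x j hj =>
    gpos_le' γ r x (hex x) hj
  have glt : ∀ x : Fin (2 * n), gpos γ r x < 2 * n := by
    intro x
    obtain ⟨k, hk⟩ := hex x
    have h2 : (γ ^ (k % (2 * n))) r = x := by
      rw [show k % (2 * n) = k % orderOf γ from by rw [hord], pow_mod_orderOf, hk]
    exact lt_of_le_of_lt (gmin x _ h2) (Nat.mod_lt _ hN)
  have pinj : ∀ x y : Fin (2 * n), gpos γ r x = gpos γ r y → x = y := by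
    intro x y h
    rw [← gspec x, ← gspec y, h]
  have einj : ∀ i j : ℕ, i < 2 * n → j < 2 * n → (γ ^ i) r = (γ ^ j) r → i = j := by
    have key : ∀ i j : ℕ, i ≤ j → j < 2 * n → (γ ^ i) r = (γ ^ j) r → i = j := by
      intro i j hij hj h
      have hfix : (γ ^ (j - i)) ((γ ^ i) r) = (γ ^ i) r := by
        rw [← Equiv.Perm.mul_apply, ← pow_add]
        rw [show j - i + i = j from by omega, h]
      have h1 : γ ^ (j - i) = 1 :=
        hcyc.pow_eq_one_iff.mpr ⟨(γ ^ i) r, hmove _, hfix⟩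
      have h2 := orderOf_dvd_of_pow_eq_one h1
      rw [hord] at h2
      have := Nat.eq_zero_of_dvd_of_lt h2 (by omega)
      omega
    intro i j hi hj h
    rcases le_total i j with hle | hle
    · exact key i j hle hj h
    · exact (key j i hle hi h.symm).symm
  -- distinctness
  have hne12 : a₁ ≠ a₂ := fun h => hd12 (h ▸ Equiv.Perm.SameCycle.refl σ a₁)
  have hne13 : a₁ ≠ a₃ := fun h => hd13 (h ▸ Equiv.Perm.SameCycle.refl σ a₁)
  have hne23 : a₂ ≠ a₃ := fun h => hd23 (h ▸ Equiv.Perm.SameCycle.refl σ a₂)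
  -- action of c
  have cfix : ∀ x : Fin (2 * n), x ≠ a₁ → x ≠ a₂ → x ≠ a₃ → c x = x := by
    intro x h1 h2 h3
    rw [hc, Equiv.Perm.mul_apply, Equiv.swap_apply_of_ne_of_ne h2 h3,
      Equiv.swap_apply_of_ne_of_ne h1 h2]
  have ca₁ : c a₁ = a₂ := by
    rw [hc, Equiv.Perm.mul_apply, Equiv.swap_apply_of_ne_of_ne hne12 hne13,
      Equiv.swap_apply_left]
  have ca₂ : c a₂ = a₃ := by
    rw [hc, Equiv.Perm.mul_apply, Equiv.swap_apply_left,
      Equiv.swap_apply_of_ne_of_ne hne13.symm hne23.symm]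
  have ca₃ : c a₃ = a₁ := by
    rw [hc, Equiv.Perm.mul_apply, Equiv.swap_apply_right, Equiv.swap_apply_right]
  -- positions
  set q₁ := gpos γ r a₁ with hq₁
  set q₂ := gpos γ r a₂ with hq₂
  set q₃ := gpos γ r a₃ with hq₃
  have hq3lt : q₃ < 2 * n := glt a₃
  have γbap : ∀ x : Fin (2 * n), (α * σb) x = γ (c x) := by
    intro x
    simp [hσb, hγ, Equiv.Perm.mul_apply]
  have ea : ∀ s : ℕ, s < 2 * n → s ≠ q₁ → s ≠ q₂ → s ≠ q₃ → c ((γ ^ s) r) = (γ ^ s) r := by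
    intro s hs h1 h2 h3
    refine cfix _ (fun h => h1 ?_) (fun h => h2 ?_) (fun h => h3 ?_)
    · exact einj s q₁ hs (glt a₁) (by rw [h, hq₁, gspec])
    · exact einj s q₂ hs (glt a₂) (by rw [h, hq₂, gspec])
    · exact einj s q₃ hs (glt a₃) (by rw [h, hq₃, gspec])
  -- the new tour
  have tour : ∀ t : ℕ, t < 2 * n → ((α * σb) ^ t) r = (γ ^ tw q₁ q₂ q₃ t) r := by
    intro t
    induction t with
    | zero => intro _; simp [tw]
    | succ t ih =>
      intro ht
      have ht' : t < 2 * n := by omega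
      have step : ((α * σb) ^ (t + 1)) r = γ (c ((γ ^ tw q₁ q₂ q₃ t) r)) := by
        rw [pow_succ', Equiv.Perm.mul_apply, ih ht', γbap]
      by_cases h1 : t < q₁
      · have e1 : tw q₁ q₂ q₃ t = t := by unfold tw; split_ifs <;> omega
        have e2 : tw q₁ q₂ q₃ (t + 1) = t + 1 := by unfold tw; split_ifs <;> omega
        rw [step, e1, e2, ea t ht' (by omega) (by omega) (by omega),
          ← Equiv.Perm.mul_apply, ← pow_succ']
      · by_cases h2 : t = q₁
        · have e1 : tw q₁ q₂ q₃ t = q₁ := by unfold tw; split_ifs <;> omega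
          have e2 : tw q₁ q₂ q₃ (t + 1) = q₂ + 1 := by unfold tw; split_ifs <;> omega
          rw [step, e1, e2, show (γ ^ q₁) r = a₁ from gspec a₁, ca₁,
            show a₂ = (γ ^ q₂) r from (gspec a₂).symm, ← Equiv.Perm.mul_apply, ← pow_succ']
        · by_cases h3 : t < q₁ + (q₃ - q₂)
          · have e1 : tw q₁ q₂ q₃ t = t - q₁ + q₂ := by unfold tw; split_ifs <;> omega
            have e2 : tw q₁ q₂ q₃ (t + 1) = t - q₁ + q₂ + 1 := by
              unfold tw; split_ifs <;> omega
            rw [step, e1, e2, ea _ (by omega) (by omega) (by omega) (by omega),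
              ← Equiv.Perm.mul_apply, ← pow_succ']
          · by_cases h4 : t = q₁ + (q₃ - q₂)
            · have e1 : tw q₁ q₂ q₃ t = q₃ := by unfold tw; split_ifs <;> omega
              have e2 : tw q₁ q₂ q₃ (t + 1) = q₁ + 1 := by unfold tw; split_ifs <;> omega
              rw [step, e1, e2, show (γ ^ q₃) r = a₃ from gspec a₃, ca₃,
                show a₁ = (γ ^ q₁) r from (gspec a₁).symm, ← Equiv.Perm.mul_apply,
                ← pow_succ']
            · by_cases h5 : t < q₃
              · have e1 : tw q₁ q₂ q₃ t = t - (q₃ - q₂) := by unfold tw; split_ifs <;> omega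
                have e2 : tw q₁ q₂ q₃ (t + 1) = t - (q₃ - q₂) + 1 := by
                  unfold tw; split_ifs <;> omega
                rw [step, e1, e2, ea _ (by omega) (by omega) (by omega) (by omega),
                  ← Equiv.Perm.mul_apply, ← pow_succ']
              · by_cases h6 : t = q₃
                · have e1 : tw q₁ q₂ q₃ t = q₂ := by unfold tw; split_ifs <;> omega
                  have e2 : tw q₁ q₂ q₃ (t + 1) = q₃ + 1 := by unfold tw; split_ifs <;> omega
                  rw [step, e1, e2, show (γ ^ q₂) r = a₂ from gspec a₂, ca₂,
                    show a₃ = (γ ^ q₃) r from (gspec a₃).symm, ← Equiv.Perm.mul_apply,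
                    ← pow_succ']
                · have e1 : tw q₁ q₂ q₃ t = t := by unfold tw; split_ifs <;> omega
                  have e2 : tw q₁ q₂ q₃ (t + 1) = t + 1 := by unfold tw; split_ifs <;> omega
                  rw [step, e1, e2, ea t ht' (by omega) (by omega) (by omega),
                    ← Equiv.Perm.mul_apply, ← pow_succ']
  -- new positions
  have gq : ∀ t : ℕ, t < 2 * n → gpos (α * σb) r ((γ ^ tw q₁ q₂ q₃ t) r) = t := by
    intro t ht
    refine gpos_eq' _ _ _ (tour t ht) ?_
    intro j hj
    by_contra hlt
    push_neg at hlt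
    have hjlt : j < 2 * n := by omega
    rw [tour _ hjlt] at hj
    have := tw_inj ho12 ho23 (einj _ _ (tw_lt ho12 ho23 hq3lt hjlt)
      (tw_lt ho12 ho23 hq3lt ht) hj)
    omega
  have g1 : gpos (α * σb) r a₁ = q₁ := by
    have e1 : tw q₁ q₂ q₃ q₁ = q₁ := by unfold tw; split_ifs <;> omega
    have := gq q₁ (by omega)
    rwa [e1, gspec a₁] at this
  have g3 : gpos (α * σb) r a₃ = q₁ + (q₃ - q₂) := by
    have e1 : tw q₁ q₂ q₃ (q₁ + (q₃ - q₂)) = q₃ := by unfold tw; split_ifs <;> omega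
    have := gq (q₁ + (q₃ - q₂)) (by omega)
    rwa [e1, gspec a₃] at this
  have g2 : gpos (α * σb) r a₂ = q₃ := by
    have e1 : tw q₁ q₂ q₃ q₃ = q₂ := by unfold tw; split_ifs <;> omega
    have := gq q₃ (by omega)
    rwa [e1, gspec a₂] at this
  have ghigh : ∀ x : Fin (2 * n), q₃ < gpos γ r x → gpos (α * σb) r x = gpos γ r x := by
    intro x hx
    have e1 : tw q₁ q₂ q₃ (gpos γ r x) = gpos γ r x := by unfold tw; split_ifs <;> omega
    have := gq (gpos γ r x) (glt x)
    rwa [e1, gspec x] at this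
  -- the preimage of a₃
  have hinvb : σb⁻¹ a₃ = c⁻¹ (σ⁻¹ a₃) := by
    rw [hσb, mul_inv_rev, Equiv.Perm.mul_apply]
  constructor
  · -- down-step
    rw [show σb (σb⁻¹ a₃) = a₃ from Equiv.apply_symm_apply σb a₃]
    by_cases hfix3 : σ⁻¹ a₃ = a₃
    · have hb : σb⁻¹ a₃ = a₂ := by
        rw [hinvb, hfix3, ← ca₂, show c⁻¹ (c a₂) = a₂ from Equiv.symm_apply_apply c a₂]
      rw [hb, g2, g3]; omega
    · have hsc3 : σ.SameCycle a₃ (σ⁻¹ a₃) := ⟨-1, by simp⟩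
      have hne1 : σ⁻¹ a₃ ≠ a₁ := fun h => hd13 ((h ▸ hsc3).symm)
      have hne2 : σ⁻¹ a₃ ≠ a₂ := fun h => hd23 ((h ▸ hsc3).symm)
      have hb : σb⁻¹ a₃ = σ⁻¹ a₃ := by
        rw [hinvb]
        exact Equiv.Perm.inv_eq_iff_eq.mpr (cfix _ hne1 hne2 hfix3).symm
      have hge : q₃ ≤ gpos γ r (σ⁻¹ a₃) := hm3 _ hsc3
      have hgt : q₃ < gpos γ r (σ⁻¹ a₃) := by
        rcases lt_or_eq_of_le hge with h | h
        · exact h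
        · exact absurd (pinj _ _ h.symm) hfix3
      rw [hb, g3, ghigh _ hgt]; omega
  · -- σb⁻¹ a₃ maps to a₃, which is not minimal in its σb-cycle: a₁ is smaller
    intro hmin
    -- a₃ and a₁ are in the same σb-cycle
    have hba₃ : σb a₃ = σ a₁ := by rw [hσb, Equiv.Perm.mul_apply, ca₃]
    have hexk : ∃ k, (σ ^ k) (σ a₁) = a₁ := by
      have hs : σ.SameCycle (σ a₁) a₁ := ⟨-1, by simp⟩
      obtain ⟨i, _, hi⟩ := hs.exists_pow_eq'
      exact ⟨i, hi⟩
    set k := Nat.find hexk with hk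
    have hkspec : (σ ^ k) (σ a₁) = a₁ := Nat.find_spec hexk
    have hkmin : ∀ j, j < k → (σ ^ j) (σ a₁) ≠ a₁ := fun j hj => Nat.find_min hexk hj
    have claim : ∀ j, j ≤ k → (σb ^ j) (σ a₁) = (σ ^ j) (σ a₁) := by
      intro j
      induction j with
      | zero => intro _; simp
      | succ j ih =>
        intro hj
        have hsc : σ.SameCycle a₁ ((σ ^ j) (σ a₁)) := by
          refine ⟨(j : ℤ) + 1, ?_⟩
          have : ((j : ℤ) + 1) = ((j + 1 : ℕ) : ℤ) := by push_cast; ring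
          rw [this, zpow_natCast, pow_succ, Equiv.Perm.mul_apply]
        have hx1 : (σ ^ j) (σ a₁) ≠ a₁ := hkmin j (by omega)
        have hx2 : (σ ^ j) (σ a₁) ≠ a₂ := fun h => hd12 (h ▸ hsc)
        have hx3 : (σ ^ j) (σ a₁) ≠ a₃ := fun h => hd13 (h ▸ hsc)
        rw [pow_succ', Equiv.Perm.mul_apply, ih (by omega), hσb, Equiv.Perm.mul_apply,
          cfix _ hx1 hx2 hx3, pow_succ', Equiv.Perm.mul_apply]
    have hsame : σb.SameCycle a₃ a₁ := by
      refine ⟨((k : ℤ) + 1), ?_⟩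
      have : ((k : ℤ) + 1) = ((k + 1 : ℕ) : ℤ) := by push_cast; ring
      rw [this, zpow_natCast, pow_succ, Equiv.Perm.mul_apply, hba₃, claim k le_rfl, hkspec]
    have := hmin a₁ (by rwa [show σb (σb⁻¹ a₃) = a₃ from Equiv.apply_symm_apply σb a₃])
    rw [g1] at this
    rw [show σb (σb⁻¹ a₃) = a₃ from Equiv.apply_symm_apply σb a₃, g3] at this
    omega
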